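/- Let K be a field of odd characteristic and let E be the elliptic curve over K with Weierstrass equation y² + a₁xy + a₃y = x³ + a₂x² + a₄x + a₆ and origin O. Let δ ≥ 1, d = 2^δ, let t ∈ E(K) be a point of order d, and let T = (d/2)t. Define the functions x' = x + x_T − x(T), y' = y + y_T − y(T), z = −x/y and z' = −x'/y' on E. Then, in the local ring at O, z' − z vanishes to order at least 4 (z' = z + O(z⁴)) and 1/z' − 1/z vanishes to order at least 2 (1/z' = 1/z + O(z²)). -/

import Mathlib

noncomputable section

open WeierstrassCurve

open scoped Classical

variable {K : Type*} [Field K]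

/-- The `x`-coordinate of an affine point (junk value `0` at the point at infinity). -/
def ptX {W : Affine K} : W.Point → K
  | .zero => 0
  | @Affine.Point.some _ _ _ x _ _ => x

/-- The `y`-coordinate of an affine point (junk value `0` at the point at infinity). -/
def ptY {W : Affine K} : W.Point → K
  | .zero => 0
  | @Affine.Point.some _ _ _ _ y _ => y

/-- A model of the function field of the elliptic curve `W` over `K`, together with the
coordinate functions `x`, `y`, the pullbacks of functions along translations and negation,
the order of vanishing of a (nonzero) function at each rational point, and the evaluation of
a function at a rational point.  All the listed axioms hold for the genuine function field
`K(E)` of `E = W`, where `τ A f = f ∘ (· + A)`, `ι f = f ∘ (-·)`, `ord P f` is the valuation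
of `f` at `P`, and `eval P f` is the value `f(P)` (junk if `P` is a pole of `f`). -/
structure FunModel (W : Affine K) where
  /-- the function field -/
  F : Type*
  /-- `F` is a field -/
  fieldF : Field F
  /-- `F` is a `K`-algebra -/
  algebraF : Algebra K F
  /-- the coordinate function `x` -/
  x : F
  /-- the coordinate function `y` -/
  y : F
  /-- `x` and `y` satisfy the Weierstrass equation of `W` -/
  equation : y ^ 2 + algebraMap K F W.a₁ * x * y + algebraMap K F W.a₃ * y
      = x ^ 3 + algebraMap K F W.a₂ * x ^ 2 + algebraMap K F W.a₄ * x + algebraMap K F W.a₆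
  /-- the function field is generated over `K` by `x` and `y` -/
  adjoin_x_y : IntermediateField.adjoin K {x, y} = ⊤
  /-- pullback of a function along the translation map `P ↦ P + A` -/
  τ : W.Point → F ≃ₐ[K] F
  τ_zero : τ 0 = AlgEquiv.refl
  τ_add : ∀ A B : W.Point, τ (A + B) = (τ A).trans (τ B)
  /-- pullback of a function along the negation map `P ↦ -P` -/
  ι : F ≃ₐ[K] F
  ι_x : ι x = x
  ι_y : ι y = -y - algebraMap K F W.a₁ * x - algebraMap K F W.a₃
  ι_τ : ∀ (A : W.Point) (f : F), ι (τ A f) = τ (-A) (ι f)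
  /-- the order of vanishing at a rational point of a nonzero function
  (junk value at the zero function); poles have negative order -/
  ord : W.Point → F → ℤ
  ord_mul : ∀ (P : W.Point) (f g : F), f ≠ 0 → g ≠ 0 → ord P (f * g) = ord P f + ord P g
  ord_min_le_add : ∀ (P : W.Point) (f g : F), f ≠ 0 → g ≠ 0 → f + g ≠ 0 →
    min (ord P f) (ord P g) ≤ ord P (f + g)
  ord_algebraMap : ∀ (P : W.Point) (c : K), c ≠ 0 → ord P (algebraMap K F c) = 0
  ord_τ : ∀ (A P : W.Point) (f : F), ord P (τ A f) = ord (P + A) f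
  ord_ι : ∀ (P : W.Point) (f : F), ord P (ι f) = ord (-P) f
  ord_x_zero : ord 0 x = -2
  ord_y_zero : ord 0 y = -3
  ord_x_nonneg : ∀ P : W.Point, P ≠ 0 → 0 ≤ ord P x
  ord_y_nonneg : ∀ P : W.Point, P ≠ 0 → 0 ≤ ord P y
  ord_x_sub_pos : ∀ P : W.Point, P ≠ 0 → 0 < ord P (x - algebraMap K F (ptX P))
  /-- evaluation of a function at a rational point (junk value at poles) -/
  eval : W.Point → F → K
  eval_algebraMap : ∀ (P : W.Point) (c : K), eval P (algebraMap K F c) = c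
  eval_x : ∀ P : W.Point, P ≠ 0 → eval P x = ptX P
  eval_y : ∀ P : W.Point, P ≠ 0 → eval P y = ptY P
  eval_add : ∀ (P : W.Point) (f g : F), (f = 0 ∨ 0 ≤ ord P f) → (g = 0 ∨ 0 ≤ ord P g) →
    eval P (f + g) = eval P f + eval P g
  eval_mul : ∀ (P : W.Point) (f g : F), (f = 0 ∨ 0 ≤ ord P f) → (g = 0 ∨ 0 ≤ ord P g) →
    eval P (f * g) = eval P f * eval P g
  eval_τ : ∀ (A P : W.Point) (f : F), eval P (τ A f) = eval (P + A) f
  eval_ι : ∀ (P : W.Point) (f : F), eval P (ι f) = eval (-P) f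
  eval_eq_zero_iff : ∀ (P : W.Point) (f : F), f ≠ 0 → 0 ≤ ord P f →
    (eval P f = 0 ↔ 0 < ord P f)

attribute [instance] FunModel.fieldF FunModel.algebraF

/-- `Γ(A,B,C)`: the slope of the secant (or tangent) line to `W` through the points
`C - A` and `A - B`. -/
noncomputable def Γsec {K : Type*} [Field K] {W : WeierstrassCurve.Affine K}
    (A B C : W.Point) : K :=
  W.slope (ptX (C - A)) (ptX (A - B)) (ptY (C - A)) (ptY (A - B))

namespace FunModel

variable {W : Affine K} (S : FunModel W)

/-- The translate `f_A = f ∘ τ_{-A}` of a function `f` by a point `A`. -/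
def trN (A : W.Point) (f : S.F) : S.F := S.τ (-A) f

/-- The function `u_{A,B} = (y_A - y(A-B)) / (x_A - x(A-B))` attached to two distinct
points `A`, `B` of `W`. -/
def u (A B : W.Point) : S.F :=
  (S.trN A S.y - algebraMap K S.F (ptY (A - B))) /
    (S.trN A S.x - algebraMap K S.F (ptX (A - B)))

/-- The Riemann–Roch space (as a subset of the function field) of the divisor `D`,
a divisor being given as a finitely supported function `W.Point → ℤ`; membership of a
nonzero `f` means `ord_P(f) + D(P) ≥ 0` for every point `P`. -/
def RRset (D : W.Point → ℤ) : Set S.F :=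
  {f | f = 0 ∨ ∀ P : W.Point, -(D P) ≤ S.ord P f}

end FunModel

/-- The divisor `⟨t⟩ = ∑_{l ∈ ℤ/dℤ} [l • t]` attached to the cyclic subgroup generated
by a point `t` of a Weierstrass curve `W`, as a function `W.Point → ℤ`. -/
def cycDiv {K : Type*} [Field K] {W : WeierstrassCurve.Affine K} (t : W.Point) :
    W.Point → ℤ :=
  fun P => if P ∈ AddSubgroup.zmultiples t then 1 else 0

/-- Let `E` be an elliptic curve over a field `K` of odd characteristic, `d = 2^δ` with
`δ ≥ 1`, `t` a point of order `d` on `E`, and `T = (d/2)t`. With `x' = x + x_T - x(T)`,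
`y' = y + y_T - y(T)`, `z = -x/y` and `z' = -x'/y'`, the function `z' - z` vanishes to order
at least `4` at `O` (i.e. `z' = z + O(z⁴)`), and `1/z' - 1/z` vanishes to order at least `2`
at `O` (i.e. `1/z' = 1/z + O(z²)`). -/
theorem velu_local_parameter {K : Type*} [Field K] (hchar : ringChar K ≠ 2)
    {W : WeierstrassCurve.Affine K} [W.IsElliptic] (S : FunModel W)
    (δ : ℕ) (hδ : 1 ≤ δ) (d : ℕ) (hd : d = 2 ^ δ)
    (t : W.Point) (ht : addOrderOf t = d)
    (T : W.Point) (hT : T = 2 ^ (δ - 1) • t)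
    (x' y' z z' : S.F)
    (hx' : x' = S.x + S.trN T S.x - algebraMap K S.F (ptX T))
    (hy' : y' = S.y + S.trN T S.y - algebraMap K S.F (ptY T))
    (hz : z = -S.x / S.y) (hz' : z' = -x' / y') :
    (z' - z = 0 ∨ 4 ≤ S.ord 0 (z' - z)) ∧
      (z'⁻¹ - z⁻¹ = 0 ∨ 2 ≤ S.ord 0 (z'⁻¹ - z⁻¹)) := by
  simp only [FunModel.trN] at hx' hy'
  -- `T` is a point of exact order two
  have hTT : T + T = 0 := by
    have hpow : 2 * 2 ^ (δ - 1) = 2 ^ δ := by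
      conv_rhs => rw [← Nat.sub_add_cancel hδ]
      rw [pow_succ]; ring
    have h2 : (2 * 2 ^ (δ - 1)) • t = (0 : W.Point) := by
      rw [hpow, ← hd, ← ht]; exact addOrderOf_nsmul_eq_zero t
    calc T + T = 2 • T := (two_nsmul T).symm
      _ = (2 * 2 ^ (δ - 1)) • t := by rw [hT, smul_smul]
      _ = 0 := h2
  have hnegT : -T = T := neg_eq_of_add_eq_zero_left hTT
  have hT0 : T ≠ 0 := by
    intro h
    have hdvd : addOrderOf t ∣ 2 ^ (δ - 1) :=
      addOrderOf_dvd_of_nsmul_eq_zero (by rw [← hT]; exact h)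
    rw [ht, hd] at hdvd
    have hle : (2 : ℕ) ^ δ ≤ 2 ^ (δ - 1) :=
      Nat.le_of_dvd (Nat.pow_pos (by norm_num)) hdvd
    have hlt : (2 : ℕ) ^ (δ - 1) < 2 ^ δ :=
      Nat.pow_lt_pow_right (by norm_num) (by omega)
    omega
  -- basic nonvanishing facts
  have hzero_ne : ∀ c : K, c ≠ 0 → algebraMap K S.F c ≠ 0 := by
    intro c hc h
    exact hc ((algebraMap K S.F).injective (by rw [h, map_zero]))
  have hordtr : ∀ f : S.F, S.ord 0 (S.τ (-T) f) = S.ord T f := by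
    intro f; rw [S.ord_τ, zero_add, hnegT]
  have hxcne : ∀ c : K, S.x ≠ algebraMap K S.F c := by
    intro c hc
    have h1 : S.τ (-T) S.x = S.x := by
      rw [hc]; exact (S.τ (-T)).commutes c
    have h2 := hordtr S.x
    rw [h1, S.ord_x_zero] at h2
    have h3 := S.ord_x_nonneg T hT0
    omega
  have hycne : ∀ c : K, S.y ≠ algebraMap K S.F c := by
    intro c hc
    have h1 : S.τ (-T) S.y = S.y := by
      rw [hc]; exact (S.τ (-T)).commutes c
    have h2 := hordtr S.y
    rw [h1, S.ord_y_zero] at h2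
    have h3 := S.ord_y_nonneg T hT0
    omega
  have hx0 : S.x ≠ 0 := by
    have := hxcne 0; rwa [map_zero] at this
  have hy0 : S.y ≠ 0 := by
    have := hycne 0; rwa [map_zero] at this
  have hordneg : ∀ f : S.F, f ≠ 0 → S.ord 0 (-f) = S.ord 0 f := by
    intro f hf
    have h1 : (-f : S.F) = algebraMap K S.F (-1) * f := by simp
    rw [h1, S.ord_mul 0 _ f (hzero_ne _ (by norm_num)) hf,
      S.ord_algebraMap 0 (-1) (by norm_num)]
    omega
  have hordinv : ∀ f : S.F, f ≠ 0 → S.ord 0 f⁻¹ = -S.ord 0 f := by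
    intro f hf
    have h := S.ord_mul 0 f f⁻¹ hf (inv_ne_zero hf)
    rw [mul_inv_cancel₀ hf] at h
    have h1 : S.ord 0 (1 : S.F) = 0 := by
      have := S.ord_algebraMap 0 1 one_ne_zero
      rwa [map_one] at this
    omega
  -- the translated coordinate differences α = x_T - x(T), β = y_T - y(T)
  set α := S.τ (-T) S.x - algebraMap K S.F (ptX T) with hαdef
  set β := S.τ (-T) S.y - algebraMap K S.F (ptY T) with hβdef
  have hα_eq : α = S.τ (-T) (S.x - algebraMap K S.F (ptX T)) := by
    rw [map_sub, (S.τ (-T)).commutes]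
  have hβ_eq : β = S.τ (-T) (S.y - algebraMap K S.F (ptY T)) := by
    rw [map_sub, (S.τ (-T)).commutes]
  have hαne : α ≠ 0 := by
    intro h
    apply sub_ne_zero.mpr (hxcne (ptX T))
    exact (S.τ (-T)).injective (by rw [← hα_eq, h, map_zero])
  have hβne : β ≠ 0 := by
    intro h
    apply sub_ne_zero.mpr (hycne (ptY T))
    exact (S.τ (-T)).injective (by rw [← hβ_eq, h, map_zero])
  have hordα : 0 < S.ord 0 α := by
    rw [hα_eq, hordtr]
    exact S.ord_x_sub_pos T hT0
  have hordβ : 0 ≤ S.ord 0 β := by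
    rw [hβ_eq, hordtr]
    by_cases hb0 : ptY T = 0
    · rw [hb0, map_zero, sub_zero]; exact S.ord_y_nonneg T hT0
    · have heq : S.y + algebraMap K S.F (-(ptY T)) = S.y - algebraMap K S.F (ptY T) := by
        rw [map_neg]; ring
      have h := S.ord_min_le_add T S.y (algebraMap K S.F (-(ptY T))) hy0
        (hzero_ne _ (neg_ne_zero.mpr hb0))
        (by rw [heq]; exact sub_ne_zero.mpr (hycne (ptY T)))
      rw [heq] at h
      have h1 := S.ord_y_nonneg T hT0
      have h2 := S.ord_algebraMap T (-(ptY T)) (neg_ne_zero.mpr hb0)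
      omega
  -- nonvanishing and orders of x' = x + α, y' = y + β
  have hx'eq : x' = S.x + α := by rw [hx', hαdef]; ring
  have hy'eq : y' = S.y + β := by rw [hy', hβdef]; ring
  have hx'ne : S.x + α ≠ 0 := by
    intro h
    have hxe : S.x = -α := by linear_combination h
    have h2 := S.ord_x_zero
    rw [hxe, hordneg α hαne] at h2
    omega
  have hy'ne : S.y + β ≠ 0 := by
    intro h
    have hye : S.y = -β := by linear_combination h
    have h2 := S.ord_y_zero
    rw [hye, hordneg β hβne] at h2
    omega
  have hordx' : S.ord 0 (S.x + α) = -2 := by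
    have hdown := S.ord_min_le_add 0 S.x α hx0 hαne hx'ne
    have hup := S.ord_min_le_add 0 (S.x + α) (-α) hx'ne (neg_ne_zero.mpr hαne)
      (by rw [add_neg_cancel_right]; exact hx0)
    rw [add_neg_cancel_right, hordneg α hαne] at hup
    rw [S.ord_x_zero] at hdown hup
    omega
  have hordy' : S.ord 0 (S.y + β) = -3 := by
    have hdown := S.ord_min_le_add 0 S.y β hy0 hβne hy'ne
    have hup := S.ord_min_le_add 0 (S.y + β) (-β) hy'ne (neg_ne_zero.mpr hβne)
      (by rw [add_neg_cancel_right]; exact hy0)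
    rw [add_neg_cancel_right, hordneg β hβne] at hup
    rw [S.ord_y_zero] at hdown hup
    omega
  -- the numerator N and the two key identities
  set N : S.F := S.x * β - S.y * α with hNdef
  have key1 : z' - z = N * (S.y * (S.y + β))⁻¹ := by
    rw [hz, hz', hx'eq, hy'eq, hNdef]
    field_simp
    ring
  have hx'ne2 : -S.x - S.τ (-T) S.x + algebraMap K S.F (ptX T) ≠ 0 := by
    intro h
    apply hx'ne
    rw [hαdef]
    linear_combination -h
  have key2 : z'⁻¹ - z⁻¹ = (-N) * (S.x * (S.x + α))⁻¹ := by
    rw [hz, hz', hx'eq, hy'eq, hNdef, inv_div, inv_div, div_neg, div_neg,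
      ← neg_div, ← neg_div, div_sub_div _ _ hx'ne hx0, ← div_eq_mul_inv,
      div_eq_div_iff (mul_ne_zero hx'ne hx0) (mul_ne_zero hx0 hx'ne)]
    ring
  by_cases hN : N = 0
  · constructor
    · left; rw [key1, hN, zero_mul]
    · left; rw [key2, hN, neg_zero, zero_mul]
  · have hordN : -2 ≤ S.ord 0 N := by
      have h1 : S.ord 0 (S.x * β) = -2 + S.ord 0 β := by
        rw [S.ord_mul 0 _ _ hx0 hβne, S.ord_x_zero]
      have h2 : S.ord 0 (S.y * α) = -3 + S.ord 0 α := by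
        rw [S.ord_mul 0 _ _ hy0 hαne, S.ord_y_zero]
      have h3 := S.ord_min_le_add 0 (S.x * β) (-(S.y * α)) (mul_ne_zero hx0 hβne)
        (neg_ne_zero.mpr (mul_ne_zero hy0 hαne))
        (by rw [← sub_eq_add_neg]; exact hN)
      rw [← sub_eq_add_neg, hordneg _ (mul_ne_zero hy0 hαne)] at h3
      rw [← hNdef] at h3
      omega
    constructor
    · right
      have hyy' : S.y * (S.y + β) ≠ 0 := mul_ne_zero hy0 hy'ne
      have h : S.ord 0 (z' - z) = S.ord 0 N + 6 := by
        rw [key1, S.ord_mul 0 N _ hN (inv_ne_zero hyy'), hordinv _ hyy',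
          S.ord_mul 0 _ _ hy0 hy'ne, S.ord_y_zero, hordy']
        omega
      omega
    · right
      have hxx' : S.x * (S.x + α) ≠ 0 := mul_ne_zero hx0 hx'ne
      have h : S.ord 0 (z'⁻¹ - z⁻¹) = S.ord 0 N + 4 := by
        rw [key2, S.ord_mul 0 (-N) _ (neg_ne_zero.mpr hN) (inv_ne_zero hxx'),
          hordneg N hN, hordinv _ hxx',
          S.ord_mul 0 _ _ hx0 hx'ne, S.ord_x_zero, hordx']
        omega
      omega
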